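/- For every ℓ ≥ 1, writing ℓ = nN + s with n ≥ 0 and 1 ≤ s ≤ N, and for every k = 1,…,N+1, the intermediate coefficient satisfies y_{k;ℓ(N+1)+k−1} = (n(N+1)+s−1)·C_N + C_{s+k−1} + u_{N+1} (as exponent vectors in ℤ^{N+1}). -/

import Mathlib

/-- The initial exchange matrix `B₀` of type `A^{(1)}_N` (indices `1, …, N+1`). -/
def b0 (N : ℕ) : ℕ → ℕ → ℤ := fun i j =>
  if 1 ≤ i ∧ i ≤ N ∧ j = i + 1 then -1
  else if 2 ≤ i ∧ i ≤ N + 1 ∧ j + 1 = i then 1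
  else if i = 1 ∧ j = N + 1 then -1
  else if i = N + 1 ∧ j = 1 then 1
  else 0

/-- Matrix mutation `μ_k` in direction `k`. -/
def bmut (k : ℕ) (B : ℕ → ℕ → ℤ) : ℕ → ℕ → ℤ := fun i j =>
  if i = k ∨ j = k then -B i j
  else B i j + max (-B i k) 0 * B k j + B i k * max (B k j) 0

/-- `Bseq N m`: the exchange matrix after `m` cyclic mutations `μ₁, μ₂, …, μ_{N+1}, μ₁, …`. -/
def Bseq (N : ℕ) : ℕ → ℕ → ℕ → ℤ
  | 0 => b0 N
  | m + 1 => bmut (m % (N + 1) + 1) (Bseq N m)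

/-- Tropical coefficient mutation `μ_k` acting on the tuple of exponent vectors
(`y j : Fin (N+1) → ℤ` is the exponent vector of the `j`-th coefficient):
`y'_k = -y_k` and, for `j ≠ k`, `y'_j = y_j + [b_{kj}]₊ • y_k - b_{kj} • min (y_k, 0)`. -/
def coefMut (N k : ℕ) (B : ℕ → ℕ → ℤ) (y : ℕ → Fin (N + 1) → ℤ) :
    ℕ → Fin (N + 1) → ℤ := fun j i =>
  if j = k then -(y k i)
  else y j i + max (B k j) 0 * y k i - B k j * min (y k i) 0

/-- `seedY N m j`: the exponent vector of the `j`-th coefficient after `m` cyclic mutations,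
starting from the standard basis vectors (coordinate `i : Fin (N+1)` encodes the variable
`y_{i+1}`). -/
def seedY (N : ℕ) : ℕ → ℕ → Fin (N + 1) → ℤ
  | 0 => fun j i => if (i : ℕ) + 1 = j then 1 else 0
  | m + 1 => coefMut N (m % (N + 1) + 1) (Bseq N m) (seedY N m)


/-- The `j`-th standard basis vector `u_j` (coordinate `i : Fin (N+1)` encodes index `i+1`). -/
def uvec (N j : ℕ) : Fin (N + 1) → ℤ := fun i => if (i : ℕ) + 1 = j then 1 else 0

/-- The fixed exponent vectors `ν_m` (`m ≥ 1`), extended `N`-periodically: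
`ν_1 = -u_1 - u_{N+1}` and `ν_j = -u_j` for `2 ≤ j ≤ N`. -/
def nuvec (N m : ℕ) : Fin (N + 1) → ℤ :=
  if (m - 1) % N + 1 = 1 then -uvec N 1 - uvec N (N + 1)
  else -uvec N ((m - 1) % N + 1)

/-- `C_m := ν_1 + ν_2 + ⋯ + ν_m`, with `C_0 = 0`. -/
def Cvec (N m : ℕ) : Fin (N + 1) → ℤ := ∑ j ∈ Finset.Icc 1 m, nuvec N j

def Bform (N r : ℕ) : ℕ → ℕ → ℤ := fun i j =>
  if 1 ≤ i ∧ i ≤ N ∧ j = i + 1 then (if i = r then 1 else -1)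
  else if 2 ≤ i ∧ i ≤ N + 1 ∧ j + 1 = i then (if j = r then -1 else 1)
  else if i = 1 ∧ j = N + 1 then (if r = 0 then -1 else 1)
  else if i = N + 1 ∧ j = 1 then (if r = 0 then 1 else -1)
  else 0

lemma b0_eq_Bform (N i j : ℕ) : b0 N i j = Bform N 0 i j := by
  unfold b0 Bform; split_ifs <;> omega

lemma row_nonpos {N r : ℕ} (hN : 2 ≤ N) (hr : r ≤ N) (j : ℕ) :
    Bform N r (r + 1) j ≤ 0 := by
  unfold Bform; split_ifs <;> omega

lemma col_nonneg {N r : ℕ} (hN : 2 ≤ N) (hr : r ≤ N) (i : ℕ) :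
    0 ≤ Bform N r i (r + 1) := by
  unfold Bform; split_ifs <;> omega

lemma row_val {N r : ℕ} (hN : 2 ≤ N) (hr : r ≤ N) (j : ℕ) (hj1 : 1 ≤ j) (hj2 : j ≤ N + 1) :
    Bform N r (r + 1) j =
      if j + 1 = r + 1 ∨ (r = 0 ∧ j = N + 1) ∨ j = r + 2 ∨ (r = N ∧ j = 1) then -1 else 0 := by
  unfold Bform; split_ifs <;> first | omega | exact absurd ‹False› not_false

lemma mod_succ (N m : ℕ) :
    (m + 1) % (N + 1) = if m % (N + 1) = N then 0 else m % (N + 1) + 1 := by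
  have hd := Nat.div_add_mod m (N + 1)
  have hlt : m % (N + 1) < N + 1 := Nat.mod_lt _ (by omega)
  by_cases hc : m % (N + 1) = N
  · have h1 : m + 1 = (N + 1) * (m / (N + 1)) + (N + 1) := by omega
    rw [if_pos hc, h1, Nat.mul_add_mod, Nat.mod_self]
  · have h1 : m + 1 = (N + 1) * (m / (N + 1)) + (m % (N + 1) + 1) := by omega
    rw [if_neg hc, h1, Nat.mul_add_mod, Nat.mod_eq_of_lt (by omega)]

lemma bmut_step {N r : ℕ} (hN : 2 ≤ N) (hr : r ≤ N) (i j : ℕ)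
    (hi1 : 1 ≤ i) (hi2 : i ≤ N + 1) (hj1 : 1 ≤ j) (hj2 : j ≤ N + 1) :
    bmut (r + 1) (Bform N r) i j = Bform N (if r = N then 0 else r + 1) i j := by
  unfold bmut
  by_cases h : i = r + 1 ∨ j = r + 1
  · rw [if_pos h]
    unfold Bform; split_ifs <;> first | omega | exact absurd ‹False› not_false
  · rw [if_neg h]
    rw [max_eq_right (neg_nonpos.mpr (col_nonneg hN hr i)), max_eq_right (row_nonpos hN hr j)]
    rw [mul_zero, zero_mul, add_zero, add_zero]
    unfold Bform; split_ifs <;> first | omega | exact absurd ‹False› not_false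

lemma Bseq_eq {N : ℕ} (hN : 2 ≤ N) : ∀ m i j, 1 ≤ i → i ≤ N + 1 → 1 ≤ j → j ≤ N + 1 →
    Bseq N m i j = Bform N (m % (N + 1)) i j := by
  intro m
  induction m with
  | zero => intro i j _ _ _ _; simpa [Bseq] using b0_eq_Bform N i j
  | succ m ih =>
    intro i j hi1 hi2 hj1 hj2
    have hr : m % (N + 1) ≤ N := by have := Nat.mod_lt m (show 0 < N+1 by omega); omega
    have e1 := ih i j hi1 hi2 hj1 hj2
    have e2 := ih i (m % (N + 1) + 1) hi1 hi2 (by omega) (by omega)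
    have e3 := ih (m % (N + 1) + 1) j (by omega) (by omega) hj1 hj2
    have h0 : Bseq N (m + 1) i j = bmut (m % (N + 1) + 1) (Bseq N m) i j := rfl
    have h1 : bmut (m % (N + 1) + 1) (Bseq N m) i j
        = bmut (m % (N + 1) + 1) (Bform N (m % (N + 1))) i j := by
      unfold bmut; rw [e1, e2, e3]
    rw [h0, h1, bmut_step hN hr i j hi1 hi2 hj1 hj2, mod_succ]

lemma uvec_nonneg (N j : ℕ) (i : Fin (N + 1)) : 0 ≤ uvec N j i := by
  unfold uvec; split_ifs <;> omega

lemma nuvec_nonpos (N t : ℕ) (i : Fin (N + 1)) : nuvec N t i ≤ 0 := by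
  unfold nuvec
  split_ifs with h
  · show -uvec N 1 i - uvec N (N + 1) i ≤ 0
    have := uvec_nonneg N 1 i; have := uvec_nonneg N (N + 1) i; omega
  · show -uvec N ((t - 1) % N + 1) i ≤ 0
    have := uvec_nonneg N ((t - 1) % N + 1) i; omega

lemma nuvec_periodic {N : ℕ} (hN : 1 ≤ N) (t : ℕ) (ht : 1 ≤ t) :
    nuvec N (t + N) = nuvec N t := by
  unfold nuvec
  rw [show t + N - 1 = (t - 1) + N by omega, Nat.add_mod_right]

lemma Cvec_zero (N : ℕ) : Cvec N 0 = 0 := by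
  unfold Cvec; simp

lemma Cvec_succ (N t : ℕ) : Cvec N (t + 1) = Cvec N t + nuvec N (t + 1) := by
  unfold Cvec
  rw [← Finset.sum_Icc_succ_top (by omega : 1 ≤ t + 1)]

lemma Cvec_nonpos (N : ℕ) : ∀ t (i : Fin (N + 1)), Cvec N t i ≤ 0 := by
  intro t
  induction t with
  | zero => intro i; rw [Cvec_zero]; simp
  | succ t ih =>
    intro i
    rw [Cvec_succ]
    have := nuvec_nonpos N (t + 1) i
    have := ih i
    show Cvec N t i + nuvec N (t + 1) i ≤ 0
    omega

lemma Cvec_one (N : ℕ) : Cvec N 1 = nuvec N 1 := by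
  unfold Cvec; simp

lemma nuvec_one (N : ℕ) : nuvec N 1 = -uvec N 1 - uvec N (N + 1) := by
  unfold nuvec; simp

lemma Cvec_last {N : ℕ} (hN : 2 ≤ N) : ∀ t, 1 ≤ t → ∀ i : Fin (N + 1), (i : ℕ) = N →
    Cvec N t i ≤ -1 := by
  intro t
  induction t with
  | zero => omega
  | succ t ih =>
    intro _ i hi
    rw [Cvec_succ]
    show Cvec N t i + nuvec N (t + 1) i ≤ -1
    have h2 := nuvec_nonpos N (t + 1) i
    rcases Nat.eq_zero_or_pos t with h | h
    · subst h
      have : Cvec N 0 i = 0 := by rw [Cvec_zero]; rfl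
      rw [this]
      have : nuvec N 1 i = -1 := by
        rw [nuvec_one]
        show -uvec N 1 i - uvec N (N + 1) i = -1
        unfold uvec
        rw [if_neg (by omega : ¬((i : ℕ) + 1 = 1)), if_pos (by omega : (i : ℕ) + 1 = N + 1)]
        norm_num
      simp only [Nat.zero_add] at this ⊢
      omega
    · have := ih h i hi
      omega

lemma min_yk {N : ℕ} (hN : 2 ≤ N) (t : ℕ) (ht : 1 ≤ t) (i : Fin (N + 1)) :
    min (Cvec N t i + uvec N (N + 1) i) 0 = Cvec N t i + uvec N (N + 1) i := by
  have h1 := Cvec_nonpos N t i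
  by_cases h : (i : ℕ) + 1 = N + 1
  · have h2 := Cvec_last hN t ht i (by omega)
    have h3 : uvec N (N + 1) i = 1 := by unfold uvec; rw [if_pos h]
    omega
  · have h3 : uvec N (N + 1) i = 0 := by unfold uvec; rw [if_neg h]
    omega

lemma Cvec_add_N {N : ℕ} (hN : 1 ≤ N) : ∀ t, Cvec N (t + N) = Cvec N t + Cvec N N := by
  intro t
  induction t with
  | zero => rw [Cvec_zero, zero_add, zero_add]
  | succ t ih =>
    rw [show t + 1 + N = (t + N) + 1 by omega, Cvec_succ, ih,
      show t + N + 1 = (t + 1) + N by omega, nuvec_periodic hN (t + 1) (by omega), Cvec_succ]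
    abel

lemma Cvec_block {N : ℕ} (hN : 1 ≤ N) : ∀ a t, Cvec N (a * N + t) = a • Cvec N N + Cvec N t := by
  intro a
  induction a with
  | zero => intro t; simp
  | succ a ih =>
    intro t
    rw [show (a + 1) * N + t = (a * N + t) + N by ring, Cvec_add_N hN, ih, succ_nsmul]
    abel

lemma seedY_succ (N m j : ℕ) (i : Fin (N + 1)) :
    seedY N (m + 1) j i =
      if j = m % (N + 1) + 1 then -(seedY N m (m % (N + 1) + 1) i)
      else seedY N m j i + max (Bseq N m (m % (N + 1) + 1) j) 0 * seedY N m (m % (N + 1) + 1) i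
        - Bseq N m (m % (N + 1) + 1) j * min (seedY N m (m % (N + 1) + 1) i) 0 := rfl

lemma ramp {N : ℕ} (hN : 2 ≤ N) : ∀ m, m ≤ N + 1 → ∀ j, 1 ≤ j → j ≤ N + 1 →
    seedY N m j = if j ≤ m then -uvec N j else uvec N j := by
  intro m
  induction m with
  | zero =>
    intro _ j hj1 _
    rw [if_neg (by omega)]
    rfl
  | succ m ih =>
    intro hm j hj1 hj2
    have hmod : m % (N + 1) = m := Nat.mod_eq_of_lt (by omega)
    funext i
    rw [seedY_succ, hmod]
    have hyk : seedY N m (m + 1) = uvec N (m + 1) := by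
      rw [ih (by omega) (m + 1) (by omega) (by omega), if_neg (by omega)]
    by_cases hj : j = m + 1
    · rw [if_pos hj, hyk, if_pos (by omega), hj]
      rfl
    · rw [if_neg hj, hyk]
      have hB : Bseq N m (m + 1) j ≤ 0 := by
        rw [Bseq_eq hN m (m + 1) j (by omega) (by omega) hj1 hj2, hmod]
        exact row_nonpos hN (by omega) j
      rw [max_eq_right hB, zero_mul, min_eq_right (uvec_nonneg N (m + 1) i), mul_zero,
        add_zero, sub_zero, ih (by omega) j hj1 hj2]
      by_cases hjm : j ≤ m
      · rw [if_pos hjm, if_pos (by omega)]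
      · rw [if_neg hjm, if_neg (by omega)]

lemma mod_shift (N m e : ℕ) (he : e ≤ N) :
    (m + e) % (N + 1) = if m % (N + 1) + e ≤ N then m % (N + 1) + e
      else m % (N + 1) + e - (N + 1) := by
  have hlt : m % (N + 1) < N + 1 := Nat.mod_lt _ (by omega)
  rw [Nat.add_mod, Nat.mod_eq_of_lt (show e < N + 1 by omega)]
  split_ifs with h
  · exact Nat.mod_eq_of_lt (by omega)
  · rw [Nat.mod_eq_sub_mod (by omega), Nat.mod_eq_of_lt (by omega)]

lemma inv_main {N : ℕ} (hN : 2 ≤ N) : ∀ m, N + 1 ≤ m →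
    (seedY N m (m % (N + 1) + 1) = Cvec N (m - N) + uvec N (N + 1)) ∧
    (seedY N m ((m + N) % (N + 1) + 1) = -(Cvec N (m - N - 1) + uvec N (N + 1))) ∧
    (∀ d, 1 ≤ d → d ≤ N - 1 → seedY N m ((m + d) % (N + 1) + 1) = nuvec N (m + d)) := by
  intro m hm
  induction m, hm using Nat.le_induction with
  | base =>
    have h0 : (N + 1) % (N + 1) = 0 := Nat.mod_self _
    have hbN : (N + 1 + N) % (N + 1) = N := by
      rw [show N + 1 + N = N + (N + 1) by omega, Nat.add_mod_right,
        Nat.mod_eq_of_lt (by omega)]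
    refine ⟨?_, ?_, ?_⟩
    · rw [h0, ramp hN (N + 1) le_rfl 1 (by omega) (by omega), if_pos (by omega),
        show N + 1 - N = 1 by omega, Cvec_one, nuvec_one]
      abel
    · rw [hbN, ramp hN (N + 1) le_rfl (N + 1) (by omega) (by omega), if_pos (by omega),
        show N + 1 - N - 1 = 0 by omega, Cvec_zero, zero_add]
    · intro d hd1 hd2
      have hdN : (N + 1 + d) % (N + 1) = d := by
        rw [show N + 1 + d = d + (N + 1) by omega, Nat.add_mod_right,
          Nat.mod_eq_of_lt (by omega)]
      rw [hdN, ramp hN (N + 1) le_rfl (d + 1) (by omega) (by omega), if_pos (by omega)]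
      unfold nuvec
      rw [show N + 1 + d - 1 = d + N by omega, Nat.add_mod_right,
        Nat.mod_eq_of_lt (show d < N by omega), if_neg (by omega)]
  | succ m hm ih =>
    obtain ⟨IHa, IHb, IHc⟩ := ih
    have hr : m % (N + 1) ≤ N := by have := Nat.mod_lt m (show 0 < N + 1 by omega); omega
    have hsucc := mod_succ N m
    -- the minimum simplification for y_k
    have hmin : ∀ i : Fin (N + 1), min (seedY N m (m % (N + 1) + 1) i) 0
        = Cvec N (m - N) i + uvec N (N + 1) i := by
      intro i
      rw [IHa]
      show min (Cvec N (m - N) i + uvec N (N + 1) i) 0 = _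
      exact min_yk hN (m - N) (by omega) i
    have hCsucc : Cvec N (m + 1 - N) = Cvec N (m - N) + nuvec N (m + 1) := by
      rw [show m + 1 - N = (m - N) + 1 by omega, Cvec_succ,
        show m - N + 1 = m + 1 - N by omega,
        show m + 1 = (m + 1 - N) + N by omega, nuvec_periodic (by omega) _ (by omega)]
      rw [show m + 1 - N + N = m + 1 by omega]
    refine ⟨?_, ?_, ?_⟩
    · -- part (a)
      have hpos : (m + 1) % (N + 1) + 1 = (m + 1) % (N + 1) + 1 := rfl
      have hne : (m + 1) % (N + 1) + 1 ≠ m % (N + 1) + 1 := by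
        rw [hsucc]; split_ifs with h <;> omega
      have hold : seedY N m ((m + 1) % (N + 1) + 1) = nuvec N (m + 1) := IHc 1 le_rfl (by omega)
      have hB : Bseq N m (m % (N + 1) + 1) ((m + 1) % (N + 1) + 1) = -1 := by
        have hb1 : (m + 1) % (N + 1) + 1 ≤ N + 1 := by
          have := Nat.mod_lt (m + 1) (show 0 < N + 1 by omega); omega
        rw [Bseq_eq hN m (m % (N + 1) + 1) ((m + 1) % (N + 1) + 1) (by omega) (by omega)
            (by omega) hb1,
          row_val hN hr _ (by omega) hb1, if_pos ?_]
        rw [hsucc]; split_ifs with h <;> omega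
      funext i
      rw [seedY_succ, if_neg hne, hB, hold, hmin i]
      show nuvec N (m + 1) i + max (-1 : ℤ) 0 * _ - (-1) * _ = (Cvec N (m + 1 - N) + uvec N (N + 1)) i
      rw [hCsucc]
      show nuvec N (m + 1) i + max (-1 : ℤ) 0 * _ - (-1) * _
        = Cvec N (m - N) i + nuvec N (m + 1) i + uvec N (N + 1) i
      norm_num
      ring
    · -- part (b)
      have hpos : (m + 1 + N) % (N + 1) = m % (N + 1) := by
        rw [show m + 1 + N = m + (N + 1) by omega, Nat.add_mod_right]
      funext i
      rw [hpos, seedY_succ, if_pos rfl, IHa]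
      show -(Cvec N (m - N) i + uvec N (N + 1) i) = -((Cvec N (m + 1 - N - 1) + uvec N (N + 1)) i)
      rw [show m + 1 - N - 1 = m - N by omega]
      rfl
    · -- part (c)
      intro d hd1 hd2
      have hdpos : m + 1 + d = m + (d + 1) := by omega
      rw [hdpos]
      have hEd := mod_shift N m (d + 1) (by omega)
      by_cases hdtop : d = N - 1
      · -- d = N - 1 : position is old wrap(k-1)
        have hposN : m + (d + 1) = m + N := by omega
        rw [hposN]
        have hB : Bseq N m (m % (N + 1) + 1) ((m + N) % (N + 1) + 1) = -1 := by
          have hE := mod_shift N m N le_rfl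
          have hb1 : (m + N) % (N + 1) + 1 ≤ N + 1 := by
            have := Nat.mod_lt (m + N) (show 0 < N + 1 by omega); omega
          rw [Bseq_eq hN m (m % (N + 1) + 1) ((m + N) % (N + 1) + 1) (by omega) (by omega)
              (by omega) hb1,
            row_val hN hr _ (by omega) hb1, if_pos ?_]
          split_ifs at hE <;> omega
        have hne : (m + N) % (N + 1) + 1 ≠ m % (N + 1) + 1 := by
          have hE := mod_shift N m N le_rfl
          split_ifs at hE <;> omega
        have hnu : nuvec N (m + N) = nuvec N (m - N) := by
          have h2 := nuvec_periodic (show 1 ≤ N by omega) (m - N) (show 1 ≤ m - N by omega)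
          rw [show m - N + N = m by omega] at h2
          rw [nuvec_periodic (by omega) m (by omega), h2]
        have hCm : Cvec N (m - N) = Cvec N (m - N - 1) + nuvec N (m - N) := by
          rw [show m - N = (m - N - 1) + 1 by omega, Cvec_succ,
            show m - N - 1 + 1 = m - N by omega]
        funext i
        rw [seedY_succ, if_neg hne, hB, IHb, hmin i, hnu, hCm]
        simp only [Pi.add_apply, Pi.neg_apply]
        rw [max_eq_right (by norm_num : (-1 : ℤ) ≤ 0)]
        ring
      · -- 1 ≤ d ≤ N - 2 : value unchanged
        have hd2' : d + 1 ≤ N - 1 := by omega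
        have hold : seedY N m ((m + (d + 1)) % (N + 1) + 1) = nuvec N (m + (d + 1)) :=
          IHc (d + 1) (by omega) hd2'
        have hne : (m + (d + 1)) % (N + 1) + 1 ≠ m % (N + 1) + 1 := by
          split_ifs at hEd <;> omega
        have hB : Bseq N m (m % (N + 1) + 1) ((m + (d + 1)) % (N + 1) + 1) = 0 := by
          have hb1 : (m + (d + 1)) % (N + 1) + 1 ≤ N + 1 := by
            have := Nat.mod_lt (m + (d + 1)) (show 0 < N + 1 by omega); omega
          rw [Bseq_eq hN m (m % (N + 1) + 1) ((m + (d + 1)) % (N + 1) + 1) (by omega) (by omega)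
              (by omega) hb1,
            row_val hN hr _ (by omega) hb1, if_neg ?_]
          split_ifs at hEd <;> omega
        funext i
        rw [seedY_succ, if_neg hne, hB, hold]
        show nuvec N (m + (d + 1)) i + max (0 : ℤ) 0 * _ - 0 * _ = nuvec N (m + (d + 1)) i
        norm_num

theorem stmt7 (N : ℕ) (hN : 2 ≤ N) :
    ∀ n s : ℕ, 1 ≤ s → s ≤ N → ∀ k, 1 ≤ k → k ≤ N + 1 →
      seedY N ((n * N + s) * (N + 1) + k - 1) k =
        (n * (N + 1) + s - 1) • Cvec N N + Cvec N (s + k - 1) + uvec N (N + 1) := by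
  intro n s hs1 hs2 k hk1 hk2
  have hprod : N + 1 ≤ (n * N + s) * (N + 1) := by
    calc N + 1 = 1 * (N + 1) := (one_mul _).symm
    _ ≤ (n * N + s) * (N + 1) := Nat.mul_le_mul_right _ (by omega)
  have hm : N + 1 ≤ (n * N + s) * (N + 1) + k - 1 := by omega
  have hmod : ((n * N + s) * (N + 1) + k - 1) % (N + 1) = k - 1 := by
    rw [show (n * N + s) * (N + 1) + k - 1 = (k - 1) + (n * N + s) * (N + 1) by omega,
      Nat.add_mul_mod_self_right, Nat.mod_eq_of_lt (by omega)]
  have ha := (inv_main hN ((n * N + s) * (N + 1) + k - 1) hm).1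
  rw [hmod, show k - 1 + 1 = k by omega] at ha
  rw [ha]
  have hs' : 1 ≤ n * (N + 1) + s := by omega
  have hidx : (n * N + s) * (N + 1) + k - 1 - N = (n * (N + 1) + s - 1) * N + (s + k - 1) := by
    zify [show N ≤ (n * N + s) * (N + 1) + k - 1 by omega,
      show 1 ≤ (n * N + s) * (N + 1) + k by omega, hs', show 1 ≤ s + k by omega, hk1]
    ring
  rw [hidx, Cvec_block (by omega : 1 ≤ N)]
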